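/- For every natural number n, every positive integer N, and every t ∈ [1/(N·2ⁿ + 2), 1/(N·2ⁿ + 2 − 2ⁿ)], one has g₂^[N](g₁^[n](t)) = ((N·2ⁿ + 2ⁿ + 2)·t − 1) / ((N·2ⁿ + 2^{n+1} + 2)·t − 1). -/

import Mathlib

/-- The element `g₁` of the Lodha–Moore group as a piecewise fractional linear map. -/
noncomputable def g₁ (t : ℝ) : ℝ :=
  if t ≤ 0 then t
  else if t ≤ 1 / 2 then 2 * t / (2 * t + 1)
  else if t ≤ 1 then 1 / (3 - 2 * t)
  else t

/-- The element `g₂` of the Lodha–Moore group as a piecewise fractional linear map. -/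
noncomputable def g₂ (t : ℝ) : ℝ :=
  if t ≤ 0 then t
  else if t ≤ 1 / 3 then t / (1 - t)
  else if t ≤ 1 / 2 then (4 * t - 1) / (5 * t - 1)
  else if t ≤ 1 then 1 / (2 - t)
  else t

lemma g1_small (t : ℝ) (h0 : 0 < t) (h1 : t ≤ 1/2) : g₁ t = 2*t/(2*t+1) := by
  unfold g₁; rw [if_neg (by linarith), if_pos h1]

lemma g2_small (t : ℝ) (h0 : 0 < t) (h1 : t ≤ 1/3) : g₂ t = t/(1-t) := by
  unfold g₂; rw [if_neg (by linarith), if_pos h1]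

lemma g2_mid (t : ℝ) (h0 : 1/3 ≤ t) (h1 : t ≤ 1/2) : g₂ t = (4*t-1)/(5*t-1) := by
  rcases eq_or_lt_of_le h0 with h | h
  · rw [← h, g2_small _ (by norm_num) le_rfl]; norm_num
  · unfold g₂; rw [if_neg (by linarith), if_neg (by linarith), if_pos h1]

lemma g2_iter_formula (N : ℕ) (hN : 0 < N) (s : ℝ)
    (hs : s ∈ Set.Icc (1/((N:ℝ)+2)) (1/((N:ℝ)+1))) :
    g₂^[N] s = (((N:ℝ)+3)*s - 1)/(((N:ℝ)+4)*s - 1) := by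
  induction N generalizing s with
  | zero => omega
  | succ N ih =>
    obtain ⟨hl, hr⟩ := hs
    push_cast at hl hr ⊢
    have hNr : (0:ℝ) ≤ N := Nat.cast_nonneg N
    have hs0 : 0 < s := lt_of_lt_of_le (by positivity) hl
    rcases Nat.eq_zero_or_pos N with h0 | hpos
    · subst h0
      simp only [Nat.cast_zero, zero_add] at hl hr ⊢
      norm_num at hl hr
      rw [Function.iterate_one, g2_mid s (by linarith) hr]
      norm_num
    · have hN1 : (1:ℝ) ≤ N := by exact_mod_cast hpos
      have hl' : 1 ≤ s * ((N:ℝ)+1+2) := by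
        rw [div_le_iff₀ (by linarith)] at hl; linarith
      have hr' : s * ((N:ℝ)+1+1) ≤ 1 := by
        rw [le_div_iff₀ (by linarith)] at hr; linarith
      have hs3 : s ≤ 1/3 := by nlinarith
      have h1s : 0 < 1 - s := by linarith
      rw [Function.iterate_succ_apply, g2_small s hs0 hs3]
      have hmem : s/(1-s) ∈ Set.Icc (1/((N:ℝ)+2)) (1/((N:ℝ)+1)) := by
        constructor
        · rw [div_le_div_iff₀ (by linarith) h1s]; nlinarith
        · rw [div_le_div_iff₀ h1s (by linarith)]; nlinarith
      rw [ih hpos _ hmem]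
      have hd : ((N:ℝ)+4)*(s/(1-s)) - 1 ≠ 0 := by
        have h2 : 1/((N:ℝ)+2) ≤ s/(1-s) := hmem.1
        rw [div_le_div_iff₀ (by linarith) h1s] at h2
        have key : ((N:ℝ)+4)*(s/(1-s)) = (((N:ℝ)+4)*s)/(1-s) := by ring
        have : 1 < ((N:ℝ)+4)*(s/(1-s)) := by
          rw [key, lt_div_iff₀ h1s]; nlinarith
        linarith
      have hd2 : ((N:ℝ)+1+4)*s - 1 ≠ 0 := by nlinarith
      rw [div_eq_div_iff hd hd2]
      field_simp
      ring

lemma g1_iter_formula (n N : ℕ) (hN : 0 < N) : ∀ t : ℝ,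
    t ∈ Set.Icc (1 / ((N : ℝ) * 2 ^ n + 2)) (1 / ((N : ℝ) * 2 ^ n + 2 - 2 ^ n)) →
    g₁^[n] t = 2^n * t / ((2^(n+1)-2)*t + 1) ∧
      g₁^[n] t ∈ Set.Icc (1/((N:ℝ)+2)) (1/((N:ℝ)+1)) := by
  have hNr : (1:ℝ) ≤ N := by exact_mod_cast hN
  induction n with
  | zero =>
    intro t ht
    have e1 : (N:ℝ)*2^0+2 = (N:ℝ)+2 := by norm_num
    have e2 : (N:ℝ)*2^0+2-2^0 = (N:ℝ)+1 := by ring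
    rw [e2, e1] at ht
    refine ⟨by norm_num, ht⟩
  | succ n ih =>
    intro t ⟨hl, hr⟩
    have h2n : (1:ℝ) ≤ 2^n := one_le_pow₀ (by norm_num)
    have hA : (0:ℝ) < (N:ℝ) * 2^(n+1) + 2 := by positivity
    have hB : (2:ℝ) ≤ (N:ℝ) * 2^(n+1) + 2 - 2^(n+1) := by
      have : (0:ℝ) ≤ ((N:ℝ) - 1) * 2^(n+1) := by
        apply mul_nonneg (by linarith) (by positivity)
      ring_nf at this ⊢
      nlinarith [this]
    have ht0 : 0 < t := lt_of_lt_of_le (by positivity) hl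
    have ht2 : t ≤ 1/2 := hr.trans (by
      rw [div_le_div_iff₀ (by linarith) (by norm_num)]; linarith)
    have hl' : 1 ≤ t * ((N:ℝ) * 2^(n+1) + 2) := by
      rw [div_le_iff₀ hA] at hl; linarith
    have hr' : t * ((N:ℝ) * 2^(n+1) + 2 - 2^(n+1)) ≤ 1 := by
      rw [le_div_iff₀ (by linarith)] at hr; linarith
    have hden : (0:ℝ) < 2*t+1 := by linarith
    have hmem : 2*t/(2*t+1) ∈
        Set.Icc (1 / ((N : ℝ) * 2 ^ n + 2)) (1 / ((N : ℝ) * 2 ^ n + 2 - 2 ^ n)) := by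
      have hC : (0:ℝ) < (N:ℝ) * 2^n + 2 := by positivity
      have hD : (0:ℝ) < (N:ℝ) * 2^n + 2 - 2^n := by nlinarith
      constructor
      · rw [div_le_div_iff₀ hC hden]
        have : (2:ℝ)^(n+1) = 2 * 2^n := by ring
        nlinarith [hl']
      · rw [div_le_div_iff₀ hden hD]
        have : (2:ℝ)^(n+1) = 2 * 2^n := by ring
        nlinarith [hr']
    rw [Function.iterate_succ_apply, g1_small t ht0 ht2]
    obtain ⟨hform, hI⟩ := ih (2*t/(2*t+1)) hmem
    refine ⟨?_, hI⟩
    rw [hform]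
    have hdd : (0:ℝ) < (2^(n+1)-2)*(2*t/(2*t+1)) + 1 := by
      have h1 : (0:ℝ) ≤ 2^(n+1) - 2 := by
        have : (2:ℝ)^(n+1) = 2 * 2^n := by ring
        nlinarith
      have h2 : (0:ℝ) ≤ 2*t/(2*t+1) := by positivity
      nlinarith
    have hdd2 : (0:ℝ) < (2^(n+1+1)-2)*t + 1 := by
      have : (2:ℝ)^(n+1+1) = 4 * 2^n := by ring
      nlinarith
    rw [div_eq_div_iff hdd.ne' hdd2.ne']
    field_simp
    ring

/-- Formula for `g₂^[N] ∘ g₁^[n]` on `[1/(N·2ⁿ + 2), 1/(N·2ⁿ + 2 − 2ⁿ)]`. -/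
theorem g₂_iter_g₁_iter_formula₂ (n : ℕ) (N : ℕ) (hN : 0 < N) (t : ℝ)
    (ht : t ∈ Set.Icc (1 / ((N : ℝ) * 2 ^ n + 2)) (1 / ((N : ℝ) * 2 ^ n + 2 - 2 ^ n))) :
    g₂^[N] (g₁^[n] t)
      = (((N : ℝ) * 2 ^ n + 2 ^ n + 2) * t - 1)
        / (((N : ℝ) * 2 ^ n + 2 ^ (n + 1) + 2) * t - 1) := by
  obtain ⟨hform, hI⟩ := g1_iter_formula n N hN t ht
  rw [hform] at hI
  rw [hform, g2_iter_formula N hN _ hI]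
  obtain ⟨hl, hr⟩ := ht
  have hNr : (1:ℝ) ≤ N := by exact_mod_cast hN
  have h2n : (1:ℝ) ≤ 2^n := one_le_pow₀ (by norm_num)
  have hA : (0:ℝ) < (N:ℝ) * 2^n + 2 := by positivity
  have ht0 : 0 < t := lt_of_lt_of_le (by positivity) hl
  have hl' : 1 ≤ t * ((N:ℝ) * 2^n + 2) := by
    rw [div_le_iff₀ hA] at hl; linarith
  have hden : (0:ℝ) < (2^(n+1)-2)*t + 1 := by
    have : (2:ℝ)^(n+1) = 2 * 2^n := by ring
    nlinarith
  have hd1 : ((N:ℝ)+4) * (2^n * t / ((2^(n+1)-2)*t + 1)) - 1 ≠ 0 := by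
    have h2e : (2:ℝ)^(n+1) = 2 * 2^n := by ring
    have key : ((N:ℝ)+4) * (2^n * t / ((2^(n+1)-2)*t + 1))
        = (((N:ℝ)+4) * (2^n * t)) / ((2^(n+1)-2)*t + 1) := by ring
    have h2 : 1 < ((N:ℝ)+4) * (2^n * t / ((2^(n+1)-2)*t + 1)) := by
      rw [key, lt_div_iff₀ hden]; nlinarith
    linarith
  have hd2 : ((N:ℝ) * 2 ^ n + 2 ^ (n + 1) + 2) * t - 1 ≠ 0 := by
    have : (2:ℝ)^(n+1) = 2 * 2^n := by ring
    nlinarith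
  rw [div_eq_div_iff hd1 hd2]
  have hx : 2^n*t/((2^(n+1)-2)*t+1) * ((2^(n+1)-2)*t+1) = (2:ℝ)^n*t :=
    div_mul_cancel₀ _ hden.ne'
  linear_combination hx
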